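/- Let X be a real normed space with dual X*, let C ⊆ X be a nonempty convex set, and let f : X → ℝ be convex and Gâteaux differentiable with gradient ∇f : X → X*. Fix x ∈ X and z ∈ C. Then z minimizes y ↦ D_f(y, x) over C (i.e., D_f(z, x) ≤ D_f(y, x) for all y ∈ C) if and only if ⟨∇f(x) − ∇f(z), y − z⟩ ≤ 0 for all y ∈ C. -/

import Mathlib

open Filter Topology

/-- The Bregman distance associated with `f` and its gradient map `gf`. -/
noncomputable def Df {X : Type*} [NormedAddCommGroup X] [NormedSpace ℝ X]
    (f : X → ℝ) (gf : X → X →L[ℝ] ℝ) (y x : X) : ℝ :=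
  f y - f x - gf x (y - x)

/-- Characterization of the minimizer of the Bregman distance over a convex set
by a variational inequality. -/
theorem bregman_projection_characterization
    {X : Type*} [NormedAddCommGroup X] [NormedSpace ℝ X]
    (f : X → ℝ) (gf : X → X →L[ℝ] ℝ)
    (hconv : ConvexOn ℝ Set.univ f)
    (hgf : ∀ p v : X, HasLineDerivAt ℝ f (gf p v) p v)
    (C : Set X) (hCne : C.Nonempty) (hCconv : Convex ℝ C)
    (x : X) (z : X) (hz : z ∈ C) :
    (∀ y ∈ C, Df f gf z x ≤ Df f gf y x) ↔
      (∀ y ∈ C, (gf x - gf z) (y - z) ≤ 0) := by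
  -- convexity of g := Df · x
  have hgconv : ConvexOn ℝ Set.univ (fun y => Df f gf y x) := by
    have haff : ConvexOn ℝ Set.univ (fun y : X => -(f x) - gf x (y - x)) := by
      refine ⟨convex_univ, fun a _ b _ s t hs ht hst => le_of_eq ?_⟩
      simp only [smul_eq_mul, map_sub, map_add, map_smul]
      linear_combination (f x - gf x x) * hst
    have := hconv.add haff
    convert this using 2 with y
    · rfl
    simp [Df]; ring
  -- derivative of t ↦ Df (p + t • v) x
  have hD : ∀ p v : X, HasDerivAt (fun t : ℝ => Df f gf (p + t • v) x)
      (gf p v - gf x v) 0 := by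
    intro p v
    have h1 : HasDerivAt (fun t : ℝ => f (p + t • v)) (gf p v) 0 := hgf p v
    have h2 : HasDerivAt (fun t : ℝ => gf x (p + t • v - x)) (gf x v) 0 := by
      have he : (fun t : ℝ => gf x (p + t • v - x))
          = fun t : ℝ => t * gf x v + gf x (p - x) := by
        funext t
        have : p + t • v - x = t • v + (p - x) := by abel
        rw [this, map_add, map_smul]; simp [mul_comm]
      rw [he]
      simpa using ((hasDerivAt_id (0:ℝ)).mul_const (gf x v)).add_const (gf x (p - x))
    simpa [Df, Pi.sub_def] using (h1.sub_const (f x)).sub h2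
  constructor
  · intro hmin y hy
    set v := y - z with hv
    have hdz := hD z v
    -- membership of segment points
    have hmem : ∀ t : ℝ, t ∈ Set.Icc (0:ℝ) 1 → z + t • v ∈ C := by
      intro t ht
      have := hCconv hz hy (by linarith [ht.1, ht.2] : (0:ℝ) ≤ 1 - t) ht.1 (by ring)
      convert this using 1
      simp [hv, smul_sub]; module
    have hslope : Tendsto (slope (fun t : ℝ => Df f gf (z + t • v) x) 0) (𝓝[>] 0)
        (𝓝 (gf z v - gf x v)) :=
      (hasDerivAt_iff_tendsto_slope.mp hdz).mono_left
        (nhdsWithin_mono 0 (fun t ht => ne_of_gt ht))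
    have hge : 0 ≤ gf z v - gf x v := by
      refine ge_of_tendsto hslope ?_
      filter_upwards [Ioo_mem_nhdsGT_of_mem (Set.mem_Ico.mpr ⟨le_refl (0:ℝ), one_pos⟩)]
        with t ht
      have hmin' := hmin _ (hmem t ⟨le_of_lt ht.1, le_of_lt ht.2⟩)
      have h0 : Df f gf (z + (0:ℝ) • v) x = Df f gf z x := by simp
      rw [slope_def_field, h0, sub_zero]
      exact div_nonneg (sub_nonneg.mpr hmin') ht.1.le
    simp only [ContinuousLinearMap.sub_apply]
    linarith
  · intro hvi y hy
    set v := y - z with hv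
    have hd : 0 ≤ gf z v - gf x v := by
      have := hvi y hy
      simp only [ContinuousLinearMap.sub_apply] at this
      linarith
    have hdz := hD z v
    set φ : ℝ → ℝ := fun t => Df f gf (z + t • v) x with hφ
    have hφconv : ConvexOn ℝ Set.univ φ := by
      have h := hgconv.comp_affineMap (AffineMap.lineMap z y : ℝ →ᵃ[ℝ] X)
      have he : φ = (fun w => Df f gf w x) ∘ (AffineMap.lineMap z y : ℝ →ᵃ[ℝ] X) := by
        funext t
        simp only [hφ, Function.comp_apply, AffineMap.coe_lineMap, AffineMap.lineMap_apply,
          vsub_eq_sub, vadd_eq_add]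
        rw [add_comm]
      rw [he]
      simpa using h
    have hslope : Tendsto (slope φ 0) (𝓝[>] 0) (𝓝 (gf z v - gf x v)) :=
      (hasDerivAt_iff_tendsto_slope.mp hdz).mono_left
        (nhdsWithin_mono 0 (fun t ht => ne_of_gt ht))
    have hle : gf z v - gf x v ≤ φ 1 - φ 0 := by
      refine le_of_tendsto hslope ?_
      filter_upwards [Ioo_mem_nhdsGT_of_mem (Set.mem_Ico.mpr ⟨le_refl (0:ℝ), one_pos⟩)]
        with t ht
      have := hφconv.secant_mono (Set.mem_univ (0:ℝ)) (Set.mem_univ t) (Set.mem_univ 1)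
        (ne_of_gt ht.1) one_ne_zero (le_of_lt ht.2)
      rw [slope_def_field]
      simpa using this
    have h0 : φ 0 = Df f gf z x := by simp [hφ]
    have h1 : φ 1 = Df f gf y x := by simp [hφ, hv]
    rw [← h0, ← h1]
    linarith
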